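/- Let M ≥ 1, λ_SR > 0, λ_RE > 0, η > 0, Ψ > 0, γ_th > 0, and let A > 0 and C > 0 be constants. Let X be the maximum of M i.i.d. exponential(λ_SR) random variables and let Z be exponential(λ_RE), independent of X. Then P( η Ψ X Z / (η A Z + C) < γ_th ) = 1 + Σ_{b=1}^{M} (−1)^b C(M,b) exp(−b λ_SR γ_th A/Ψ) · λ_RE ∫₀^∞ exp( −b λ_SR γ_th C/(η Ψ z) − λ_RE z ) dz. -/

import Mathlib

open MeasureTheory ProbabilityTheory Real Finset

lemma expMeasure_eq_withDensity (r : ℝ) :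
    expMeasure r = volume.withDensity (exponentialPDF r) := rfl

lemma expMeasure_Iio {r : ℝ} (hr : 0 < r) {t : ℝ} (ht : 0 ≤ t) :
    expMeasure r (Set.Iio t) = ENNReal.ofReal (1 - Real.exp (-(r * t))) := by
  rw [expMeasure_eq_withDensity, withDensity_apply _ measurableSet_Iio,
    restrict_Iio_eq_restrict_Iic, ← withDensity_apply _ measurableSet_Iic]
  show (volume.withDensity (exponentialPDF r)) (Set.Iic t) = _
  rw [withDensity_apply _ measurableSet_Iic, lintegral_exponentialPDF_eq_antiDeriv hr t,
    if_pos ht]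

lemma expMeasure_ae_pos {r : ℝ} (hr : 0 < r) :
    ∀ᵐ z ∂(expMeasure r), 0 < z := by
  rw [ae_iff]
  have : {z : ℝ | ¬ 0 < z} = Set.Iic 0 := by ext z; simp
  rw [this, expMeasure_eq_withDensity, withDensity_apply _ measurableSet_Iic,
    lintegral_exponentialPDF_eq_antiDeriv hr 0]
  simp

lemma sup_cdf {Ω : Type*} [MeasurableSpace Ω] (P : Measure Ω) [IsProbabilityMeasure P]
    (M : ℕ) (hM : 1 ≤ M) (lamSR : ℝ) (hSR : 0 < lamSR)
    (X : Fin M → Ω → ℝ) (Z : Ω → ℝ)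
    (hmeasX : ∀ m, Measurable (X m))
    (hindep : iIndepFun (Sum.elim X fun _ : Unit => Z) P)
    (hlawX : ∀ m, P.map (X m) = expMeasure lamSR)
    {t : ℝ} (ht : 0 ≤ t) :
    P {ω | (⨆ m, X m ω) < t} = ENNReal.ofReal ((1 - Real.exp (-(lamSR * t))) ^ M) := by
  have : Nonempty (Fin M) := ⟨⟨0, hM⟩⟩
  have hb : 0 ≤ 1 - Real.exp (-(lamSR * t)) := by
    have : Real.exp (-(lamSR * t)) ≤ 1 := Real.exp_le_one_iff.mpr (by nlinarith)
    linarith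
  have hset : {ω | (⨆ m, X m ω) < t} = ⋂ i, (Sum.elim X fun _ : Unit => Z) i ⁻¹'
      (Sum.elim (fun _ : Fin M => Set.Iio t) (fun _ : Unit => Set.univ) i) := by
    rw [Set.iInter_sum]
    ext ω
    simp only [Set.mem_setOf_eq, Set.mem_inter_iff, Set.mem_iInter, Sum.elim_inl, Sum.elim_inr,
      Set.mem_preimage, Set.mem_Iio, Set.preimage_univ, Set.mem_univ, Set.iInter_true,
      and_true]
    constructor
    · refine fun h => ⟨fun m => lt_of_le_of_lt
        (le_ciSup (f := fun m => X m ω) (Set.Finite.bddAbove (Set.finite_range _)) m) h, fun _ => trivial⟩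
    · rintro ⟨h, -⟩
      obtain ⟨m0, hm0⟩ := Finite.exists_max (fun m => X m ω)
      exact lt_of_le_of_lt (ciSup_le hm0) (h m0)
  rw [hset, hindep.meas_iInter (fun i => ?_)]
  · rw [Fintype.prod_sum_type]
    have h1 : ∀ m : Fin M, P ((Sum.elim X fun _ : Unit => Z) (Sum.inl m) ⁻¹'
        (Sum.elim (fun _ : Fin M => Set.Iio t) (fun _ : Unit => Set.univ) (Sum.inl m)))
        = ENNReal.ofReal (1 - Real.exp (-(lamSR * t))) := by
      intro m
      simp only [Sum.elim_inl]
      rw [← Measure.map_apply (hmeasX m) measurableSet_Iio, hlawX m, expMeasure_Iio hSR ht]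
    simp only [h1, Sum.elim_inr, Set.preimage_univ, measure_univ, Finset.prod_const,
      Finset.card_univ, Fintype.card_fin, one_pow, mul_one]
    rw [← ENNReal.ofReal_pow hb]
  · cases i with
    | inl m => exact ⟨Set.Iio t, measurableSet_Iio, rfl⟩
    | inr u => exact ⟨Set.univ, MeasurableSet.univ, rfl⟩

lemma indep_sup {Ω : Type*} [MeasurableSpace Ω] (P : Measure Ω) [IsProbabilityMeasure P]
    (M : ℕ) (hM : 1 ≤ M)
    (X : Fin M → Ω → ℝ) (Z : Ω → ℝ)
    (hmeasX : ∀ m, Measurable (X m)) (hmeasZ : Measurable Z)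
    (hindep : iIndepFun (Sum.elim X fun _ : Unit => Z) P) :
    IndepFun (fun ω => ⨆ m, X m ω) Z P := by
  classical
  have : Nonempty (Fin M) := ⟨⟨0, hM⟩⟩
  set S : Finset (Fin M ⊕ Unit) := Finset.univ.image Sum.inl with hS
  set T : Finset (Fin M ⊕ Unit) := {Sum.inr ()} with hT
  have hmeas : ∀ i, Measurable ((Sum.elim X fun _ : Unit => Z) i) := by
    rintro (m | u)
    · exact hmeasX m
    · exact hmeasZ
  have hST : Disjoint S T := by
    simp only [hS, hT, Finset.disjoint_singleton_right, Finset.mem_image]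
    rintro ⟨m, -, h⟩
    exact Sum.inl_ne_inr h
  have base := hindep.indepFun_finset S T hST hmeas
  have hgS : ∀ m : Fin M, (Sum.inl m : Fin M ⊕ Unit) ∈ S := by
    intro m; simp [hS]
  have hhT : (Sum.inr () : Fin M ⊕ Unit) ∈ T := by simp [hT]
  let g : (∀ i : S, ℝ) → ℝ := fun v => ⨆ m : Fin M, v ⟨Sum.inl m, hgS m⟩
  let h : (∀ i : T, ℝ) → ℝ := fun v => v ⟨Sum.inr (), hhT⟩
  have hg : Measurable g := Measurable.iSup fun m => measurable_pi_apply _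
  have hh : Measurable h := measurable_pi_apply _
  exact base.comp hg hh

/-- The computation of `Θ` in Appendix D (eq. (39), before the Bessel evaluation): for
constants `A, C > 0`, with `X` the maximum of `M` i.i.d. exponential(λ_SR) gains and `Z`
exponential(λ_RE) independent of `X`,
`P(ηΨXZ/(ηAZ + C) < γ_th) = 1 + Σ_b (-1)^b C(M,b) e^{-bλ_SRγ_thA/Ψ} λ_RE ∫₀^∞
  e^{-bλ_SRγ_thC/(ηΨz) - λ_REz} dz`. -/
theorem statement_12 {Ω : Type*} [MeasurableSpace Ω] (P : Measure Ω) [IsProbabilityMeasure P]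
    (M : ℕ) (hM : 1 ≤ M) (lamSR lamRE η Ψ γth A C : ℝ)
    (hSR : 0 < lamSR) (hRE : 0 < lamRE) (hη : 0 < η) (hΨ : 0 < Ψ) (hγ : 0 < γth)
    (hA : 0 < A) (hC : 0 < C)
    (X : Fin M → Ω → ℝ) (Z : Ω → ℝ)
    (hmeasX : ∀ m, Measurable (X m)) (hmeasZ : Measurable Z)
    (hindep : iIndepFun (Sum.elim X fun _ : Unit => Z) P)
    (hlawX : ∀ m, P.map (X m) = expMeasure lamSR)
    (hlawZ : P.map Z = expMeasure lamRE) :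
    (P {ω | η * Ψ * (⨆ m, X m ω) * Z ω / (η * A * Z ω + C) < γth}).toReal =
      1 + ∑ b ∈ Finset.Icc 1 M, (-1 : ℝ) ^ b * (M.choose b : ℝ) *
        Real.exp (-(b : ℝ) * lamSR * γth * A / Ψ) *
        (lamRE * ∫ z in Set.Ioi (0 : ℝ),
          Real.exp (-(b : ℝ) * lamSR * γth * C / (η * Ψ * z) - lamRE * z)) := by
  haveI := isProbabilityMeasure_expMeasure hRE
  set a : ℝ := γth * A / Ψ with ha_def
  set c : ℝ := γth * C / (η * Ψ) with hc_def
  have ha : 0 < a := by positivity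
  have hc : 0 < c := by positivity
  set Y : Ω → ℝ := fun ω => ⨆ m, X m ω with hY_def
  have hY : Measurable Y := Measurable.iSup fun m => hmeasX m
  haveI : IsProbabilityMeasure (P.map Y) := Measure.isProbabilityMeasure_map hY.aemeasurable
  set f : ℝ → ℝ := fun z => (1 - Real.exp (-(lamSR * (a + c / z)))) ^ M with hf_def
  have hmeasdiv : Measurable fun z : ℝ => a + c / z := by
    exact measurable_const.add (measurable_const.div measurable_id)
  have hmeasf : Measurable f := by
    exact ((measurable_const.sub ((hmeasdiv.const_mul lamSR).neg.exp)).pow measurable_const)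
  have hSmeas : MeasurableSet {p : ℝ × ℝ | η * Ψ * p.1 * p.2 / (η * A * p.2 + C) < γth} := by
    have hm : Measurable fun p : ℝ × ℝ => η * Ψ * p.1 * p.2 / (η * A * p.2 + C) := by
      exact (((measurable_const.mul measurable_fst).mul measurable_snd).div
        ((measurable_snd.const_mul _).add measurable_const))
    exact measurableSet_lt hm measurable_const
  have hindepYZ : IndepFun Y Z P := indep_sup P M hM X Z hmeasX hmeasZ hindep
  have hmap : P.map (fun ω => (Y ω, Z ω)) = (P.map Y).prod (P.map Z) :=
    (indepFun_iff_map_prod_eq_prod_map_map hY.aemeasurable hmeasZ.aemeasurable).mp hindepYZ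
  have step1 : P {ω | η * Ψ * (⨆ m, X m ω) * Z ω / (η * A * Z ω + C) < γth}
      = ((P.map Y).prod (expMeasure lamRE))
        {p : ℝ × ℝ | η * Ψ * p.1 * p.2 / (η * A * p.2 + C) < γth} := by
    rw [← hlawZ, ← hmap, Measure.map_apply (hY.prodMk hmeasZ) hSmeas]
    rfl
  have step2 : ((P.map Y).prod (expMeasure lamRE))
        {p : ℝ × ℝ | η * Ψ * p.1 * p.2 / (η * A * p.2 + C) < γth}
      = ∫⁻ z, ENNReal.ofReal (f z) ∂(expMeasure lamRE) := by
    rw [Measure.prod_apply_symm hSmeas]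
    refine lintegral_congr_ae ?_
    filter_upwards [expMeasure_ae_pos hRE] with z hz
    have hD : 0 < η * A * z + C := by positivity
    have hslice : ((fun y => (y, z)) ⁻¹' {p : ℝ × ℝ | η * Ψ * p.1 * p.2 / (η * A * p.2 + C) < γth})
        = Set.Iio (a + c / z) := by
      ext y
      simp only [Set.mem_preimage, Set.mem_setOf_eq, Set.mem_Iio]
      have h1 : (a + c / z) * (η * Ψ * z) = γth * (η * A * z + C) := by
        rw [ha_def, hc_def]
        field_simp
      rw [div_lt_iff₀ hD, ← h1, show η * Ψ * y * z = y * (η * Ψ * z) from by ring]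
      exact mul_lt_mul_iff_left₀ (by positivity)
    rw [hslice, Measure.map_apply hY measurableSet_Iio]
    have ht0 : (0:ℝ) ≤ a + c / z := by positivity
    exact sup_cdf P M hM lamSR hSR X Z hmeasX hindep hlawX ht0
  have hfnonneg : ∀ z : ℝ, 0 < z → 0 ≤ f z := by
    intro z hz
    apply pow_nonneg
    have : Real.exp (-(lamSR * (a + c / z))) ≤ 1 := by
      rw [Real.exp_le_one_iff]
      have : (0:ℝ) ≤ a + c / z := by positivity
      nlinarith
    linarith
  have hpdfmeas : Measurable (exponentialPDF lamRE) :=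
    ENNReal.measurable_ofReal.comp (measurable_exponentialPDFReal lamRE)
  have step3 : (∫⁻ z, ENNReal.ofReal (f z) ∂(expMeasure lamRE)).toReal
      = ∫ z in Set.Ioi (0:ℝ), lamRE * Real.exp (-(lamRE * z)) * f z := by
    rw [expMeasure_eq_withDensity,
      lintegral_withDensity_eq_lintegral_mul _ hpdfmeas
        (show Measurable fun z => ENNReal.ofReal (f z) from
          ENNReal.measurable_ofReal.comp hmeasf)]
    rw [← lintegral_add_compl (fun z => (exponentialPDF lamRE * fun z => ENNReal.ofReal (f z)) z)
      (measurableSet_Iic (a := (0:ℝ)))]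
    have h0 : (∫⁻ z in Set.Iic (0:ℝ),
        (exponentialPDF lamRE * fun z => ENNReal.ofReal (f z)) z ∂volume) = 0 := by
      rw [← restrict_Iio_eq_restrict_Iic]
      have hae : ∀ᵐ z ∂(volume.restrict (Set.Iio (0:ℝ))),
          ((exponentialPDF lamRE * fun z => ENNReal.ofReal (f z)) z) = 0 := by
        filter_upwards [self_mem_ae_restrict measurableSet_Iio] with z hz
        simp [Pi.mul_apply, exponentialPDF_of_neg hz]
      rw [lintegral_congr_ae hae]
      simp
    rw [h0, zero_add, Set.compl_Iic]
    have h1 : (∫⁻ z in Set.Ioi (0:ℝ),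
        (exponentialPDF lamRE * fun z => ENNReal.ofReal (f z)) z ∂volume)
        = ∫⁻ z in Set.Ioi (0:ℝ),
          ENNReal.ofReal (lamRE * Real.exp (-(lamRE * z)) * f z) ∂volume := by
      refine setLIntegral_congr_fun measurableSet_Ioi (fun z (hz : 0 < z) => ?_)
      rw [Pi.mul_apply, exponentialPDF_of_nonneg hz.le,
        ← ENNReal.ofReal_mul (by positivity)]
    rw [h1, ← integral_eq_lintegral_of_nonneg_ae]
    · filter_upwards [self_mem_ae_restrict (measurableSet_Ioi (a := (0:ℝ)))] with z hz
      exact mul_nonneg (mul_nonneg hRE.le (Real.exp_nonneg _)) (hfnonneg z hz)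
    · exact (((measurable_const.mul
        ((measurable_id.const_mul lamRE).neg.exp)).mul hmeasf)).aestronglyMeasurable
  rw [step1, step2, step3]
  clear step1 step2 step3 hmap hindepYZ hSmeas hY hY_def hindep hlawX hlawZ hmeasX hmeasZ
  -- the calculus part
  set h : ℕ → ℝ → ℝ := fun b z => lamRE * Real.exp (-(lamRE * z)) *
    ((-1:ℝ) ^ b * (M.choose b : ℝ) * Real.exp (-((b:ℝ) * (lamSR * (a + c / z))))) with hh_def
  have hexpand : ∀ z : ℝ, lamRE * Real.exp (-(lamRE * z)) * f z
      = ∑ b ∈ Finset.range (M + 1), h b z := by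
    intro z
    have hpow : (1 - Real.exp (-(lamSR * (a + c / z)))) ^ M
        = ∑ b ∈ Finset.range (M + 1),
          (-1:ℝ) ^ b * (M.choose b : ℝ) * Real.exp (-((b:ℝ) * (lamSR * (a + c / z)))) := by
      rw [sub_eq_add_neg, add_comm, add_pow]
      refine Finset.sum_congr rfl fun b hb => ?_
      rw [one_pow, mul_one, neg_pow, show -((b:ℝ) * (lamSR * (a + c / z)))
        = (b:ℕ) * (-(lamSR * (a + c / z))) from by push_cast; ring, Real.exp_nat_mul]
      ring
    rw [hf_def]
    simp only
    rw [hpow, Finset.mul_sum]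
  have hint : ∀ b : ℕ, IntegrableOn (h b) (Set.Ioi (0:ℝ)) volume := by
    intro b
    refine Integrable.mono' (g := fun z => (lamRE * (M.choose b : ℝ)) * Real.exp (-lamRE * z))
      ((exp_neg_integrableOn_Ioi 0 hRE).const_mul _) ?_ ?_
    · refine Measurable.aestronglyMeasurable ?_
      refine ((measurable_const.mul ((measurable_id.const_mul lamRE).neg.exp)).mul
        (measurable_const.mul ?_))
      exact (((hmeasdiv.const_mul lamSR).const_mul ((b:ℝ))).neg.exp)
    · filter_upwards [self_mem_ae_restrict (measurableSet_Ioi (a := (0:ℝ)))] with z hz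
      have hz' : (0:ℝ) < z := hz
      have hzn : (0:ℝ) ≤ a + c / z := add_nonneg ha.le (div_nonneg hc.le hz'.le)
      have he1 : Real.exp (-((b:ℝ) * (lamSR * (a + c / z)))) ≤ 1 := by
        rw [Real.exp_le_one_iff]
        have hb0 : (0:ℝ) ≤ (b:ℝ) * (lamSR * (a + c / z)) :=
          mul_nonneg (Nat.cast_nonneg b) (mul_nonneg hSR.le hzn)
        linarith
      rw [hh_def]
      simp only [Real.norm_eq_abs, abs_mul, abs_pow, abs_neg, abs_one, one_pow, one_mul,
        abs_of_pos hRE, abs_of_nonneg (Real.exp_nonneg _),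
        abs_of_nonneg (by positivity : (0:ℝ) ≤ ((M.choose b : ℕ) : ℝ))]
      have hE1 : (0:ℝ) ≤ Real.exp (-(lamRE * z)) := Real.exp_nonneg _
      have hCb : (0:ℝ) ≤ (M.choose b : ℝ) := Nat.cast_nonneg _
      rw [neg_mul]
      nlinarith [mul_le_mul_of_nonneg_left he1
        (mul_nonneg (mul_nonneg hRE.le hE1) hCb),
        mul_nonneg (mul_nonneg hRE.le hE1) hCb]
  have hsplit : (∫ z in Set.Ioi (0:ℝ), lamRE * Real.exp (-(lamRE * z)) * f z)
      = ∑ b ∈ Finset.range (M + 1), ∫ z in Set.Ioi (0:ℝ), h b z := by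
    rw [show (fun z => lamRE * Real.exp (-(lamRE * z)) * f z)
      = fun z => ∑ b ∈ Finset.range (M + 1), h b z from funext hexpand]
    exact integral_finset_sum _ fun b _ => hint b
  have hbase : (∫ z in Set.Ioi (0:ℝ), Real.exp (-(lamRE * z))) = lamRE⁻¹ := by
    have := integral_comp_mul_left_Ioi (fun x => Real.exp (-x)) 0 hRE
    simp only [mul_zero, integral_exp_neg_Ioi, neg_zero, Real.exp_zero, smul_eq_mul,
      mul_one] at this
    exact this
  have hzero : (∫ z in Set.Ioi (0:ℝ), h 0 z) = 1 := by
    rw [show (fun z => h 0 z) = fun z => lamRE * Real.exp (-(lamRE * z)) from funext fun z => by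
      simp [hh_def]]
    rw [integral_const_mul, hbase, mul_inv_cancel₀ (ne_of_gt hRE)]
  have hterm : ∀ b ∈ Finset.Icc 1 M, (∫ z in Set.Ioi (0:ℝ), h b z)
      = (-1:ℝ) ^ b * (M.choose b : ℝ) * Real.exp (-(b : ℝ) * lamSR * γth * A / Ψ) *
        (lamRE * ∫ z in Set.Ioi (0:ℝ),
          Real.exp (-(b : ℝ) * lamSR * γth * C / (η * Ψ * z) - lamRE * z)) := by
    intro b hb
    have key : ∀ z : ℝ, h b z = ((-1:ℝ) ^ b * (M.choose b : ℝ)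
        * Real.exp (-(b : ℝ) * lamSR * γth * A / Ψ) * lamRE)
        * Real.exp (-(b : ℝ) * lamSR * γth * C / (η * Ψ * z) - lamRE * z) := by
      intro z
      rw [hh_def]
      simp only
      rw [show -((b:ℝ) * (lamSR * (a + c / z)))
        = (-(b : ℝ) * lamSR * γth * A / Ψ)
          + (-(b : ℝ) * lamSR * γth * C / (η * Ψ * z)) from by rw [ha_def, hc_def]; ring,
        Real.exp_add,
        show (-(b : ℝ) * lamSR * γth * C / (η * Ψ * z) - lamRE * z)
        = (-(b : ℝ) * lamSR * γth * C / (η * Ψ * z)) + (-(lamRE * z)) from by ring,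
        Real.exp_add]
      ring
    rw [show (fun z => h b z) = fun z => ((-1:ℝ) ^ b * (M.choose b : ℝ)
        * Real.exp (-(b : ℝ) * lamSR * γth * A / Ψ) * lamRE)
        * Real.exp (-(b : ℝ) * lamSR * γth * C / (η * Ψ * z) - lamRE * z) from funext key]
    rw [integral_const_mul]
    ring
  have hrange : Finset.range (M + 1) = insert 0 (Finset.Icc 1 M) := by
    ext x
    simp only [Finset.mem_range, Finset.mem_insert, Finset.mem_Icc]
    omega
  rw [hsplit, hrange, Finset.sum_insert (by simp), hzero]
  exact congrArg (1 + ·) (Finset.sum_congr rfl hterm)
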